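/- Let m, n ≥ 2 be integers. The graph semiring of the disjoint union of m cycles of length n (the {0, ω}-direct union of m copies of S_{c_n}) is a homomorphic image of a subsemiring of the m-th direct power S_{c_n}^m. -/

import Mathlib

universe u v

-- The underlying set of the graph semiring of a graph with vertex set `V`:
-- the vertices together with two extra elements `0` and `ω`.
inductive GS (V : Type u) : Type u where
  | zero : GS V
  | omega : GS V
  | vert : V → GS V

-- Multiplication of the graph semiring: `x·y = ω` if `x, y` are vertices joined by an
-- edge, and `x·y = 0` otherwise.
open Classical in
noncomputable def gsMul {V : Type u} (E : V → V → Prop) : GS V → GS V → GS V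
  | GS.vert a, GS.vert b => if E a b then GS.omega else GS.zero
  | _, _ => GS.zero

-- The flat addition of the graph semiring: `a + b = a` if `a = b`, else `0`.
open Classical in
noncomputable def gsAdd {V : Type u} (a b : GS V) : GS V :=
  if a = b then a else GS.zero

-- `gsSum f n = f 0 + f 1 + ⋯ + f n` (a sum of `n + 1` terms).
noncomputable def gsSum {V : Type u} (f : ℕ → GS V) : ℕ → GS V
  | 0 => f 0
  | n + 1 => gsAdd (gsSum f n) (f (n + 1))

-- `E` is a graph (in the sense of the paper): a directed graph with no isolated
-- vertices in which every vertex has out-degree at most 1 and in-degree at most 1.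
def IsGraph {V : Type u} (E : V → V → Prop) : Prop :=
  (∀ v : V, ∃ u : V, E v u ∨ E u v) ∧
  (∀ v a b : V, E v a → E v b → a = b) ∧
  (∀ v a b : V, E a v → E b v → a = b)

-- `v 0, v 1, …, v (m - 1)` is a path of the graph `E` with `m` vertices.
def IsPathOn {V : Type u} (E : V → V → Prop) (m : ℕ) (v : ℕ → V) : Prop :=
  (∀ i < m, ∀ j < m, v i = v j → i = j) ∧
  (∀ i : ℕ, i + 1 < m → E (v i) (v (i + 1)))

-- `v 0, v 1, …, v (m - 1)` is a cycle of the graph `E` of length `m`.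
def IsCycleOn {V : Type u} (E : V → V → Prop) (m : ℕ) (v : ℕ → V) : Prop :=
  1 ≤ m ∧
  (∀ i < m, ∀ j < m, v i = v j → i = j) ∧
  (∀ i : ℕ, i + 1 < m → E (v i) (v (i + 1))) ∧
  E (v (m - 1)) (v 0)

-- `B` (with operations `addB`, `mulB`) is a homomorphic image of a subsemiring of `A`
-- (with operations `addA`, `mulA`): there is a subset of `A` closed under both
-- operations and a surjection from it onto `B` preserving both operations.
def IsHomImageOfSub {A : Type u} {B : Type v}
    (addA mulA : A → A → A) (addB mulB : B → B → B) : Prop :=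
  ∃ (T : Set A) (φ : A → B),
    (∀ x ∈ T, ∀ y ∈ T, addA x y ∈ T ∧ mulA x y ∈ T) ∧
    (∀ b : B, ∃ x ∈ T, φ x = b) ∧
    (∀ x ∈ T, ∀ y ∈ T,
      φ (addA x y) = addB (φ x) (φ y) ∧ φ (mulA x y) = mulB (φ x) (φ y))

-- The edge relation of the cycle with vertex set `ZMod n`: edges `(i, i + 1)`.
def cycleE (n : ℕ) : ZMod n → ZMod n → Prop := fun i j => j = i + 1

-- The edge relation of the disjoint union of `m` cycles of length `n`.
def unionCyclesE (m n : ℕ) : Fin m × ZMod n → Fin m × ZMod n → Prop :=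
  fun p q => p.1 = q.1 ∧ q.2 = p.2 + 1

namespace Stmt18Aux

/-- shift indicator -/
def indf (n : ℕ) {m : ℕ} (j k : Fin m) : ZMod n := if j.val < k.val then 1 else 0

def fcyc (n : ℕ) {m : ℕ} (k : Fin m) (i : ZMod n) : Fin m → GS (ZMod n) :=
  fun j => GS.vert (i + indf n j k)

lemma one_ne_zero' {n : ℕ} (hn : 2 ≤ n) : (1 : ZMod n) ≠ 0 := by
  haveI : Fact (1 < n) := ⟨by omega⟩
  exact one_ne_zero

lemma key {n m : ℕ} (hn : 2 ≤ n) (k k' : Fin m) (d : ZMod n)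
    (h : ∀ j : Fin m, indf n j k' = indf n j k + d) : k = k' ∧ d = 0 := by
  rcases lt_trichotomy k.val k'.val with hlt | heq | hgt
  · exfalso
    have hk := h k
    have hk' := h k'
    simp [indf, hlt, Nat.lt_irrefl, Nat.lt_asymm hlt] at hk hk'
    rw [← hk'] at hk
    first | exact one_ne_zero' hn hk | exact one_ne_zero' hn hk.symm
  · have hkk' : k = k' := Fin.ext heq
    subst hkk'
    have hk := h k
    simp [indf] at hk
    exact ⟨rfl, hk.symm⟩
  · exfalso
    have hk := h k
    have hk' := h k'
    simp [indf, hgt, Nat.lt_irrefl, Nat.lt_asymm hgt] at hk hk'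
    rw [← hk] at hk'
    have : (1 : ZMod n) = 0 := by linear_combination -hk'
    exact one_ne_zero' hn this

lemma fcyc_inj {n m : ℕ} (hn : 2 ≤ n) {k k' : Fin m} {i i' : ZMod n}
    (h : fcyc n k i = fcyc n k' i') : k = k' ∧ i = i' := by
  have h' : ∀ j : Fin m, indf n j k' = indf n j k + (i - i') := by
    intro j
    have := congrFun h j
    simp only [fcyc, GS.vert.injEq] at this
    linear_combination -this
  obtain ⟨hk, hd⟩ := key hn k k' _ h'
  exact ⟨hk, by linear_combination hd⟩

variable (m n : ℕ)

def allomega : Fin m → GS (ZMod n) := fun _ => GS.omega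

def T : Set (Fin m → GS (ZMod n)) :=
  {x | (∀ j, ∃ a, x j = GS.vert a) → ∃ k i, x = fcyc n k i}

open Classical in
noncomputable def phi (x : Fin m → GS (ZMod n)) : GS (Fin m × ZMod n) :=
  if x = allomega m n then GS.omega
  else if h : ∃ p : Fin m × ZMod n, x = fcyc n p.1 p.2 then GS.vert h.choose
  else GS.zero

lemma fcyc_ne_allomega {k : Fin m} {i : ZMod n} : fcyc n k i ≠ allomega m n := by
  intro h
  have := congrFun h k
  simp [fcyc, allomega] at this

lemma phi_fcyc (hn : 2 ≤ n) (k : Fin m) (i : ZMod n) :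
    phi m n (fcyc n k i) = GS.vert (k, i) := by
  unfold phi
  rw [if_neg (fcyc_ne_allomega m n)]
  have h : ∃ p : Fin m × ZMod n, fcyc n k i = fcyc n p.1 p.2 := ⟨(k, i), rfl⟩
  rw [dif_pos h]
  obtain ⟨hk, hi⟩ := fcyc_inj hn h.choose_spec
  rw [show h.choose = (k, i) from Prod.ext hk.symm hi.symm]

lemma phi_omega : phi m n (allomega m n) = GS.omega := if_pos rfl

lemma phi_zero_of {x : Fin m → GS (ZMod n)}
    (hx1 : ¬ ∀ j, ∃ a, x j = GS.vert a) (hx2 : x ≠ allomega m n) :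
    phi m n x = GS.zero := by
  unfold phi
  rw [if_neg hx2, dif_neg]
  rintro ⟨p, rfl⟩
  exact hx1 fun j => ⟨_, rfl⟩

lemma phi_eq_vert {x : Fin m → GS (ZMod n)} {p : Fin m × ZMod n}
    (h : phi m n x = GS.vert p) : x = fcyc n p.1 p.2 := by
  by_cases h1 : x = allomega m n
  · unfold phi at h; rw [if_pos h1] at h; cases h
  by_cases h2 : ∃ p : Fin m × ZMod n, x = fcyc n p.1 p.2
  · unfold phi at h; rw [if_neg h1, dif_pos h2] at h
    injection h with h3
    exact h3 ▸ h2.choose_spec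
  · unfold phi at h; rw [if_neg h1, dif_neg h2] at h; cases h

lemma phi_eq_omega {x : Fin m → GS (ZMod n)}
    (h : phi m n x = GS.omega) : x = allomega m n := by
  by_cases h1 : x = allomega m n
  · exact h1
  by_cases h2 : ∃ p : Fin m × ZMod n, x = fcyc n p.1 p.2
  · unfold phi at h; rw [if_neg h1, dif_pos h2] at h; cases h
  · unfold phi at h; rw [if_neg h1, dif_neg h2] at h; cases h

lemma gsMul_ne_vert {V : Type u} (E : V → V → Prop) (u v : GS V) (a : V) :
    gsMul E u v ≠ GS.vert a := by
  cases u <;> cases v <;> simp [gsMul] <;> split <;> simp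

lemma gsMul_zero_left {V : Type u} (E : V → V → Prop) (v : GS V) :
    gsMul E GS.zero v = GS.zero := by cases v <;> rfl

lemma gsMul_omega_left {V : Type u} (E : V → V → Prop) (v : GS V) :
    gsMul E GS.omega v = GS.zero := by cases v <;> rfl

lemma gsMul_zero_right {V : Type u} (E : V → V → Prop) (v : GS V) :
    gsMul E v GS.zero = GS.zero := by cases v <;> rfl

lemma gsMul_omega_right {V : Type u} (E : V → V → Prop) (v : GS V) :
    gsMul E v GS.omega = GS.zero := by cases v <;> rfl

lemma gsAdd_self {V : Type u} (a : GS V) : gsAdd a a = a := if_pos rfl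

lemma gsAdd_eq_vert {V : Type u} {a b : GS V} {c : V}
    (h : gsAdd a b = GS.vert c) : a = b ∧ a = GS.vert c := by
  unfold gsAdd at h
  split_ifs at h with h1
  exact ⟨h1, h⟩

lemma gsAdd_eq_omega {V : Type u} {a b : GS V}
    (h : gsAdd a b = GS.omega) : a = b ∧ a = GS.omega := by
  unfold gsAdd at h
  split_ifs at h with h1
  exact ⟨h1, h⟩

lemma prod_fcyc_eq_allomega {n : ℕ} (hn : 2 ≤ n) {k k' : Fin m} {i i' : ZMod n}
    (h : (fun j => gsMul (cycleE n) (fcyc n k i j) (fcyc n k' i' j)) = allomega m n) :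
    k = k' ∧ i' = i + 1 := by
  have h' : ∀ j : Fin m, indf n j k' = indf n j k + (i + 1 - i') := by
    intro j
    have hj := congrFun h j
    simp only [fcyc, gsMul, allomega] at hj
    split_ifs at hj with hc
    unfold cycleE at hc
    linear_combination hc
  obtain ⟨hk, hd⟩ := key hn k k' _ h'
  exact ⟨hk, by linear_combination -hd⟩

lemma prod_fcyc_of_edge {n : ℕ} (k : Fin m) (i : ZMod n) :
    (fun j => gsMul (cycleE n) (fcyc n k i j) (fcyc n k (i + 1) j)) = allomega m n := by
  funext j
  simp only [fcyc, gsMul, allomega]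
  rw [if_pos]
  unfold cycleE
  ring


lemma not_vert_cases {V : Type u} (v : GS V) (h : ∀ a, v ≠ GS.vert a) :
    v = GS.zero ∨ v = GS.omega := by
  cases v with
  | zero => exact Or.inl rfl
  | omega => exact Or.inr rfl
  | vert a => exact absurd rfl (h a)

lemma phi_mul_zero {x y : Fin m → GS (ZMod n)}
    (h : ∃ j, gsMul (cycleE n) (x j) (y j) = GS.zero) :
    phi m n (fun j => gsMul (cycleE n) (x j) (y j)) = GS.zero := by
  obtain ⟨j, hj⟩ := h
  refine phi_zero_of m n (fun hAV => gsMul_ne_vert _ _ _ _ (hAV j).choose_spec) ?_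
  intro he
  have := congrFun he j
  rw [hj] at this
  simp [allomega] at this

end Stmt18Aux


/-- For `m, n ≥ 2`, the graph semiring of the disjoint union of `m`
cycles of length `n` (the `{0, ω}`-direct union of `m` copies of `S_{c_n}`) is a
homomorphic image of a subsemiring of the `m`-th direct power `S_{c_n}^m`. -/
theorem stmt_18 (m n : ℕ) (hm : 2 ≤ m) (hn : 2 ≤ n) :
    IsHomImageOfSub
      (fun f g : Fin m → GS (ZMod n) => fun i => gsAdd (f i) (g i))
      (fun f g : Fin m → GS (ZMod n) => fun i => gsMul (cycleE n) (f i) (g i))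
      (gsAdd : GS (Fin m × ZMod n) → GS (Fin m × ZMod n) → GS (Fin m × ZMod n))
      (gsMul (unionCyclesE m n)) := by
  classical
  refine ⟨Stmt18Aux.T m n, Stmt18Aux.phi m n, ?_, ?_, ?_⟩
  · -- closure
    intro x hx y hy
    constructor
    · intro hAV
      beta_reduce at hAV ⊢
      have hxy : x = y := funext fun j => (Stmt18Aux.gsAdd_eq_vert (hAV j).choose_spec).1
      subst hxy
      have hsum : (fun i => gsAdd (x i) (x i)) = x :=
        funext fun j => Stmt18Aux.gsAdd_self _
      rw [hsum]
      apply hx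
      intro j
      obtain ⟨a, ha⟩ := hAV j
      rw [Stmt18Aux.gsAdd_self] at ha
      exact ⟨a, ha⟩
    · intro hAV
      exact absurd (hAV ⟨0, by omega⟩).choose_spec (Stmt18Aux.gsMul_ne_vert _ _ _ _)
  · -- surjectivity
    intro b
    cases b with
    | zero =>
      refine ⟨fun _ => GS.zero, fun h => absurd (h ⟨0, by omega⟩) (by simp), ?_⟩
      refine Stmt18Aux.phi_zero_of m n (fun h => absurd (h ⟨0, by omega⟩) (by simp)) ?_
      intro h
      have := congrFun h ⟨0, by omega⟩
      simp [Stmt18Aux.allomega] at this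
    | omega =>
      exact ⟨Stmt18Aux.allomega m n, fun h => absurd (h ⟨0, by omega⟩)
        (by simp [Stmt18Aux.allomega]), Stmt18Aux.phi_omega m n⟩
    | vert p =>
      exact ⟨Stmt18Aux.fcyc n p.1 p.2, fun _ => ⟨p.1, p.2, rfl⟩,
        (Stmt18Aux.phi_fcyc m n hn p.1 p.2).trans (by rfl)⟩
  · -- homomorphism
    intro x hx y hy
    constructor
    · -- addition
      beta_reduce
      by_cases hxy : x = y
      · subst hxy
        have hsum : (fun i => gsAdd (x i) (x i)) = x :=
          funext fun j => Stmt18Aux.gsAdd_self _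
        rw [hsum, Stmt18Aux.gsAdd_self]
      · have hne1 : ¬ ∀ j, ∃ a, gsAdd (x j) (y j) = GS.vert a := by
          intro hAV
          exact hxy (funext fun j => (Stmt18Aux.gsAdd_eq_vert (hAV j).choose_spec).1)
        have hne2 : (fun i => gsAdd (x i) (y i)) ≠ Stmt18Aux.allomega m n := by
          intro h
          exact hxy (funext fun j => (Stmt18Aux.gsAdd_eq_omega (congrFun h j)).1)
        rw [Stmt18Aux.phi_zero_of m n hne1 hne2]
        by_cases hphi : Stmt18Aux.phi m n x = Stmt18Aux.phi m n y
        · have hz : Stmt18Aux.phi m n x = GS.zero := by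
            rcases h0 : Stmt18Aux.phi m n x with _ | _ | p
            · rfl
            · exact absurd ((Stmt18Aux.phi_eq_omega m n h0).trans
                (Stmt18Aux.phi_eq_omega m n (hphi.symm.trans h0)).symm) hxy
            · exact absurd ((Stmt18Aux.phi_eq_vert m n h0).trans
                (Stmt18Aux.phi_eq_vert m n (hphi.symm.trans h0)).symm) hxy
          rw [← hphi, hz, Stmt18Aux.gsAdd_self]
        · simp [gsAdd, hphi]
    · -- multiplication
      beta_reduce
      by_cases hAVx : ∀ j, ∃ a, x j = GS.vert a
      · obtain ⟨k, i, rfl⟩ := hx hAVx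
        by_cases hAVy : ∀ j, ∃ a, y j = GS.vert a
        · obtain ⟨k', i', rfl⟩ := hy hAVy
          rw [Stmt18Aux.phi_fcyc m n hn, Stmt18Aux.phi_fcyc m n hn]
          by_cases hedge : k = k' ∧ i' = i + 1
          · obtain ⟨rfl, rfl⟩ := hedge
            rw [Stmt18Aux.prod_fcyc_of_edge, Stmt18Aux.phi_omega]
            show GS.omega = if unionCyclesE m n (k, i) (k, i + 1) then GS.omega else GS.zero
            rw [if_pos ⟨rfl, rfl⟩]
          · have h1 : (fun j => gsMul (cycleE n) (Stmt18Aux.fcyc n k i j)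
                (Stmt18Aux.fcyc n k' i' j)) ≠ Stmt18Aux.allomega m n :=
              fun h => hedge (Stmt18Aux.prod_fcyc_eq_allomega m hn h)
            have h2 : ¬ ∀ j, ∃ a, gsMul (cycleE n) (Stmt18Aux.fcyc n k i j)
                (Stmt18Aux.fcyc n k' i' j) = GS.vert a :=
              fun h => Stmt18Aux.gsMul_ne_vert _ _ _ _ (h ⟨0, by omega⟩).choose_spec
            rw [Stmt18Aux.phi_zero_of m n h2 h1]
            show GS.zero = if unionCyclesE m n (k, i) (k', i') then GS.omega else GS.zero
            rw [if_neg]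
            exact fun hc => hedge ⟨hc.1, hc.2⟩
        · -- y has a non-vertex component
          push_neg at hAVy
          obtain ⟨j, hj⟩ := hAVy
          have hyj : y j = GS.zero ∨ y j = GS.omega := Stmt18Aux.not_vert_cases _ hj
          have hLHS : Stmt18Aux.phi m n (fun j => gsMul (cycleE n)
              (Stmt18Aux.fcyc n k i j) (y j)) = GS.zero := by
            apply Stmt18Aux.phi_mul_zero
            refine ⟨j, ?_⟩
            rcases hyj with h | h <;> rw [h]
            · exact Stmt18Aux.gsMul_zero_right _ _
            · exact Stmt18Aux.gsMul_omega_right _ _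
          rw [hLHS]
          have hphiy : Stmt18Aux.phi m n y = GS.zero ∨ Stmt18Aux.phi m n y = GS.omega := by
            rcases h0 : Stmt18Aux.phi m n y with _ | _ | p
            · exact Or.inl rfl
            · exact Or.inr rfl
            · exfalso
              have h4 := congrFun (Stmt18Aux.phi_eq_vert m n h0) j
              simp only [Stmt18Aux.fcyc] at h4
              exact hj _ h4
          rcases hphiy with h | h <;> rw [h]
          · exact (Stmt18Aux.gsMul_zero_right _ _).symm
          · exact (Stmt18Aux.gsMul_omega_right _ _).symm
      · -- x has a non-vertex component
        push_neg at hAVx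
        obtain ⟨j, hj⟩ := hAVx
        have hxj : x j = GS.zero ∨ x j = GS.omega := Stmt18Aux.not_vert_cases _ hj
        have hLHS : Stmt18Aux.phi m n (fun j => gsMul (cycleE n) (x j) (y j)) = GS.zero := by
          apply Stmt18Aux.phi_mul_zero
          refine ⟨j, ?_⟩
          rcases hxj with h | h <;> rw [h]
          · exact Stmt18Aux.gsMul_zero_left _ _
          · exact Stmt18Aux.gsMul_omega_left _ _
        rw [hLHS]
        have hphix : Stmt18Aux.phi m n x = GS.zero ∨ Stmt18Aux.phi m n x = GS.omega := by
          rcases h0 : Stmt18Aux.phi m n x with _ | _ | p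
          · exact Or.inl rfl
          · exact Or.inr rfl
          · exfalso
            have h4 := congrFun (Stmt18Aux.phi_eq_vert m n h0) j
            simp only [Stmt18Aux.fcyc] at h4
            exact hj _ h4
        rcases hphix with h | h <;> rw [h]
        · exact (Stmt18Aux.gsMul_zero_left _ _).symm
        · exact (Stmt18Aux.gsMul_omega_left _ _).symm
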